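/- Uniqueness of the Harder–Narasimhan filtration: if 0 = V₀ ⊂ V₁ ⊂ ... ⊂ V_n = V and 0 = W₀ ⊂ W₁ ⊂ ... ⊂ W_m = V are two filtrations such that each successive quotient V_i/V_{i-1} and W_j/W_{j-1} is semistable and the slopes μ(V_i/V_{i-1}) and μ(W_j/W_{j-1}) are strictly decreasing in i and j respectively, then n = m and V_i = W_i for all i. -/

import Mathlib

open CategoryTheory CategoryTheory.Limits

/-- The slope `μ = deg / rank` of an object. -/
noncomputable def slopeOf {C : Type*} [Category C] [Abelian C]
    (deg rank : C → ℚ) (X : C) : ℚ := deg X / rank X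

/-- An object is (slope-)semistable if every nonzero subobject has slope at most
the slope of the object. -/
def SlopeSemistable {C : Type*} [Category C] [Abelian C]
    (deg rank : C → ℚ) (V : C) : Prop :=
  ∀ (W : C) (f : W ⟶ V), Mono f → ¬ IsZero W →
    slopeOf deg rank W ≤ slopeOf deg rank V

/-- The successive quotient `F i.succ / F i.castSucc` of a monotone chain of
subobjects. -/
noncomputable def succQuot {C : Type*} [Category C] [Abelian C] {V : C} {n : ℕ}
    (F : Fin (n + 1) → CategoryTheory.Subobject V) (hF : Monotone F) (i : Fin n) : C :=
  cokernel (CategoryTheory.Subobject.ofLE (F i.castSucc) (F i.succ)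
    (hF (Fin.castSucc_lt_succ : i.castSucc < i.succ).le))

section Aux

variable {C : Type*} [Category C] [Abelian C] {deg rank : C → ℚ}

lemma hom_eq_zero_of_slope_lt
    (hdeg : ∀ ⦃X Y : C⦄ (f : X ⟶ Y), Mono f → deg Y = deg X + deg (cokernel f))
    (hrank : ∀ ⦃X Y : C⦄ (f : X ⟶ Y), Mono f → rank Y = rank X + rank (cokernel f))
    (hrank_pos : ∀ X : C, ¬ IsZero X → 0 < rank X)
    {A B : C} (hA : SlopeSemistable deg rank A) (hB : SlopeSemistable deg rank B)
    (hlt : slopeOf deg rank B < slopeOf deg rank A) (f : A ⟶ B) : f = 0 := by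
  by_contra hf
  have hA0 : ¬ IsZero A := fun h => hf (h.eq_of_src f 0)
  by_cases hm : Mono f
  · exact absurd (hB A f hm hA0) (not_le.mpr hlt)
  · have hK0 : ¬ IsZero (kernel f) := fun h =>
      hm (CategoryTheory.Abelian.mono_of_kernel_ι_eq_zero f (h.eq_of_src _ _))
    have hQ0 : ¬ IsZero (Abelian.coimage f) := by
      intro h
      apply hf
      rw [← Abelian.coimage.fac f, h.eq_of_tgt (Abelian.coimage.π f) 0, zero_comp]
    have h1 : slopeOf deg rank (Abelian.coimage f) ≤ slopeOf deg rank B :=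
      hB _ (Abelian.factorThruCoimage f) inferInstance hQ0
    have h2 : slopeOf deg rank (kernel f) ≤ slopeOf deg rank A :=
      hA _ (kernel.ι f) inferInstance hK0
    have hdA : deg A = deg (kernel f) + deg (Abelian.coimage f) :=
      hdeg (kernel.ι f) inferInstance
    have hrA : rank A = rank (kernel f) + rank (Abelian.coimage f) :=
      hrank (kernel.ι f) inferInstance
    have rK := hrank_pos _ hK0
    have rQ := hrank_pos _ hQ0
    have rA := hrank_pos _ hA0
    have h3 : slopeOf deg rank A ≤ slopeOf deg rank (Abelian.coimage f) := by
      have h2' : deg (kernel f) * rank A ≤ deg A * rank (kernel f) := by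
        have h2'' := h2
        unfold slopeOf at h2''
        rwa [div_le_div_iff₀ rK rA] at h2''
      unfold slopeOf
      rw [div_le_div_iff₀ rA rQ]
      rw [hdA, hrA] at h2' ⊢
      nlinarith [h2']
    linarith [h1, h3, hlt]

lemma hn_step
    (hdeg : ∀ ⦃X Y : C⦄ (f : X ⟶ Y), Mono f → deg Y = deg X + deg (cokernel f))
    (hrank : ∀ ⦃X Y : C⦄ (f : X ⟶ Y), Mono f → rank Y = rank X + rank (cokernel f))
    (hrank_pos : ∀ X : C, ¬ IsZero X → 0 < rank X)
    {V : C} {n m : ℕ}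
    (Vf : Fin (n + 1) → Subobject V) (Wf : Fin (m + 1) → Subobject V)
    (hVmono : StrictMono Vf) (hWmono : StrictMono Wf)
    (hV0 : Vf 0 = ⊥) (hW0 : Wf 0 = ⊥) (hWm : Wf (Fin.last m) = ⊤)
    (hVss : ∀ i : Fin n, SlopeSemistable deg rank (succQuot Vf hVmono.monotone i))
    (hWss : ∀ j : Fin m, SlopeSemistable deg rank (succQuot Wf hWmono.monotone j))
    (k : ℕ) (hkn : k < n) (hkm : k < m)
    (heq : Vf ⟨k, by omega⟩ = Wf ⟨k, by omega⟩) :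
    ∃ j : Fin m, k ≤ j.val ∧ Vf ⟨k + 1, by omega⟩ ≤ Wf j.succ ∧
      slopeOf deg rank (succQuot Vf hVmono.monotone ⟨k, hkn⟩) ≤
        slopeOf deg rank (succQuot Wf hWmono.monotone j) := by
  classical
  set i : Fin n := ⟨k, hkn⟩ with hi
  -- the set of candidate indices
  set T : Finset (Fin m) := Finset.univ.filter (fun j => Vf i.succ ≤ Wf j.succ) with hT
  have hne : T.Nonempty := by
    refine ⟨⟨m - 1, by omega⟩, ?_⟩
    rw [hT, Finset.mem_filter]
    refine ⟨Finset.mem_univ _, ?_⟩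
    have : Fin.succ (⟨m - 1, by omega⟩ : Fin m) = Fin.last m := by
      ext; simp [Fin.last]; omega
    rw [this, hWm]
    exact le_top
  set j : Fin m := T.min' hne with hj
  have hjmem : Vf i.succ ≤ Wf j.succ :=
    (Finset.mem_filter.mp (T.min'_mem hne)).2
  have hkj : k ≤ j.val := by
    have hlt1 : Vf i.castSucc < Vf i.succ := hVmono (Fin.castSucc_lt_succ : i.castSucc < i.succ)
    have h4 : Wf ⟨k, by omega⟩ < Wf j.succ := by
      rw [← heq]
      exact lt_of_lt_of_le hlt1 hjmem
    have := hWmono.lt_iff_lt.mp h4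
    simp [Fin.lt_def] at this
    omega
  have h3 : ¬ Vf i.succ ≤ Wf j.castSucc := by
    intro hc
    rcases Nat.eq_zero_or_pos j.val with h0 | hpos
    · have hz : j.castSucc = (0 : Fin (m + 1)) := by ext; simpa using h0
      rw [hz, hW0] at hc
      have : Vf 0 < Vf i.succ := hVmono (Fin.succ_pos i)
      rw [hV0] at this
      exact this.not_ge hc
    · set j' : Fin m := ⟨j.val - 1, by omega⟩ with hj'
      have hj's : j'.succ = j.castSucc := by ext; simp [hj']; omega
      have hmem : j' ∈ T := Finset.mem_filter.mpr
        ⟨Finset.mem_univ _, by rw [hj's]; exact hc⟩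
      have hjj : j ≤ j' := T.min'_le j' hmem
      have : j.val ≤ j.val - 1 := hjj
      omega
  have h1 : Vf i.castSucc ≤ Wf j.castSucc := by
    have heq' : Vf i.castSucc = Wf ⟨k, by omega⟩ := heq
    rw [heq']
    exact hWmono.monotone (by simp [Fin.le_def]; omega)
  -- build the nonzero map between the graded pieces
  have hab := hVmono.monotone (Fin.castSucc_lt_succ : i.castSucc < i.succ).le
  have hwb := hWmono.monotone (Fin.castSucc_lt_succ : j.castSucc < j.succ).le
  have hzero : Subobject.ofLE _ _ hab ≫
      (Subobject.ofLE _ _ hjmem ≫ cokernel.π (Subobject.ofLE _ _ hwb)) = 0 := by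
    rw [← Category.assoc, Subobject.ofLE_comp_ofLE,
      ← Subobject.ofLE_comp_ofLE _ (Wf j.castSucc) _ h1 hwb,
      Category.assoc, cokernel.condition, comp_zero]
  have hψ : (cokernel.desc (Subobject.ofLE _ _ hab)
      (Subobject.ofLE _ _ hjmem ≫ cokernel.π (Subobject.ofLE _ _ hwb)) hzero :
      succQuot Vf hVmono.monotone i ⟶ succQuot Wf hWmono.monotone j) ≠ 0 := by
    intro h0
    have hfac : Subobject.ofLE _ _ hjmem ≫ cokernel.π (Subobject.ofLE _ _ hwb) = 0 := by
      rw [← cokernel.π_desc (Subobject.ofLE _ _ hab)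
        (Subobject.ofLE _ _ hjmem ≫ cokernel.π (Subobject.ofLE _ _ hwb)) hzero]
      exact (congrArg (fun g => cokernel.π _ ≫ g) h0).trans comp_zero
    have hlift := CategoryTheory.Abelian.monoLift_comp (Subobject.ofLE _ _ hwb)
      (Subobject.ofLE _ _ hjmem) hfac
    refine h3 (Subobject.le_of_comm
      (CategoryTheory.Abelian.monoLift (Subobject.ofLE _ _ hwb)
        (Subobject.ofLE _ _ hjmem) hfac) ?_)
    calc CategoryTheory.Abelian.monoLift (Subobject.ofLE _ _ hwb)
          (Subobject.ofLE _ _ hjmem) hfac ≫ (Wf j.castSucc).arrow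
        = CategoryTheory.Abelian.monoLift (Subobject.ofLE _ _ hwb)
            (Subobject.ofLE _ _ hjmem) hfac ≫ Subobject.ofLE _ _ hwb ≫ (Wf j.succ).arrow := by
          rw [Subobject.ofLE_arrow]
      _ = Subobject.ofLE _ _ hjmem ≫ (Wf j.succ).arrow := by
          rw [← Category.assoc, hlift]
      _ = (Vf i.succ).arrow := Subobject.ofLE_arrow hjmem
  refine ⟨j, hkj, hjmem, ?_⟩
  by_contra hslope
  push_neg at hslope
  exact hψ (hom_eq_zero_of_slope_lt hdeg hrank hrank_pos (hVss i) (hWss j) hslope _)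


end Aux

/-- Uniqueness of the Harder–Narasimhan filtration: two filtrations with
semistable successive quotients of strictly decreasing slopes coincide. -/
theorem harderNarasimhan_unique
    {C : Type*} [Category C] [Abelian C] (deg rank : C → ℚ)
    (hdeg : ∀ ⦃X Y : C⦄ (f : X ⟶ Y), Mono f → deg Y = deg X + deg (cokernel f))
    (hrank : ∀ ⦃X Y : C⦄ (f : X ⟶ Y), Mono f → rank Y = rank X + rank (cokernel f))
    (hrank_pos : ∀ X : C, ¬ IsZero X → 0 < rank X)
    (V : C) (n m : ℕ)
    (Vf : Fin (n + 1) → Subobject V) (Wf : Fin (m + 1) → Subobject V)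
    (hVmono : StrictMono Vf) (hWmono : StrictMono Wf)
    (hV0 : Vf 0 = ⊥) (hVn : Vf (Fin.last n) = ⊤)
    (hW0 : Wf 0 = ⊥) (hWm : Wf (Fin.last m) = ⊤)
    (hVss : ∀ i : Fin n, SlopeSemistable deg rank (succQuot Vf hVmono.monotone i))
    (hWss : ∀ j : Fin m, SlopeSemistable deg rank (succQuot Wf hWmono.monotone j))
    (hVdec : ∀ i j : Fin n, i < j →
      slopeOf deg rank (succQuot Vf hVmono.monotone j) <
        slopeOf deg rank (succQuot Vf hVmono.monotone i))
    (hWdec : ∀ i j : Fin m, i < j →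
      slopeOf deg rank (succQuot Wf hWmono.monotone j) <
        slopeOf deg rank (succQuot Wf hWmono.monotone i)) :
    ∃ h : n = m, ∀ i : Fin (n + 1), Vf i = Wf (Fin.cast (by rw [h]) i) := by
  have all : ∀ k (hkn : k < n + 1) (hkm : k < m + 1), Vf ⟨k, hkn⟩ = Wf ⟨k, hkm⟩ := by
    intro k
    induction k with
    | zero =>
      intro hkn hkm
      have e1 : (⟨0, hkn⟩ : Fin (n + 1)) = 0 := by ext; simp
      have e2 : (⟨0, hkm⟩ : Fin (m + 1)) = 0 := by ext; simp
      rw [e1, e2, hV0, hW0]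
    | succ k ih =>
      intro hkn hkm
      have hkn' : k < n := by omega
      have hkm' : k < m := by omega
      have heq : Vf ⟨k, by omega⟩ = Wf ⟨k, by omega⟩ := ih (by omega) (by omega)
      obtain ⟨j, hkj, hle, hsl⟩ := hn_step hdeg hrank hrank_pos Vf Wf hVmono hWmono
        hV0 hW0 hWm hVss hWss k hkn' hkm' heq
      obtain ⟨j₂, hkj₂, hle₂, hsl₂⟩ := hn_step hdeg hrank hrank_pos Wf Vf hWmono hVmono
        hW0 hV0 hVn hWss hVss k hkm' hkn' heq.symm
      have h6 : slopeOf deg rank (succQuot Vf hVmono.monotone j₂) ≤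
          slopeOf deg rank (succQuot Vf hVmono.monotone ⟨k, hkn'⟩) := by
        rcases eq_or_lt_of_le hkj₂ with h | h
        · have : (⟨k, hkn'⟩ : Fin n) = j₂ := by ext; simp [h]
          rw [this]
        · exact (hVdec ⟨k, hkn'⟩ j₂ (by simpa [Fin.lt_def] using h)).le
      have hjk : j.val = k := by
        by_contra hne
        have h5 := hWdec ⟨k, hkm'⟩ j (by simp [Fin.lt_def]; omega)
        linarith
      have hjk₂ : j₂.val = k := by
        by_contra hne
        have h5 := hVdec ⟨k, hkn'⟩ j₂ (by simp [Fin.lt_def]; omega)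
        have h7 : slopeOf deg rank (succQuot Wf hWmono.monotone j) ≤
            slopeOf deg rank (succQuot Wf hWmono.monotone ⟨k, hkm'⟩) := by
          have : (⟨k, hkm'⟩ : Fin m) = j := by ext; simp [hjk]
          rw [this]
        linarith
      have ej : j.succ = (⟨k + 1, by omega⟩ : Fin (m + 1)) := by ext; simp [hjk]
      have ej₂ : j₂.succ = (⟨k + 1, by omega⟩ : Fin (n + 1)) := by ext; simp [hjk₂]
      rw [ej] at hle
      rw [ej₂] at hle₂
      exact le_antisymm hle hle₂
  have hnm : n = m := by
    rcases Nat.lt_trichotomy n m with h | h | h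
    · have h1 := all n (by omega) (by omega)
      have e1 : (⟨n, by omega⟩ : Fin (n + 1)) = Fin.last n := rfl
      rw [e1, hVn] at h1
      have h2 : Wf ⟨n, by omega⟩ < Wf (Fin.last m) :=
        hWmono (by simp [Fin.lt_def]; omega)
      rw [← h1, hWm] at h2
      exact absurd h2 (lt_irrefl _)
    · exact h
    · have h1 := all m (by omega) (by omega)
      have e1 : (⟨m, by omega⟩ : Fin (m + 1)) = Fin.last m := rfl
      rw [e1, hWm] at h1
      have h2 : Vf ⟨m, by omega⟩ < Vf (Fin.last n) :=
        hVmono (by simp [Fin.lt_def]; omega)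
      rw [h1, hVn] at h2
      exact absurd h2 (lt_irrefl _)
  refine ⟨hnm, fun i => ?_⟩
  exact all i.val i.isLt (by omega)
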